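/- Let E be a finite set, n ≥ 1, A ∈ ℝ^{E×n} a real matrix, z ∈ ℂ^E, Z := diag(z), and X ∈ ℂ^{n×n} symmetric (X^T = X). Suppose the vectors i, u ∈ ℂ^n, ξ ∈ ℂ^E and the scalar α ∈ ℂ satisfy A^T ξ + i = 0, A u + Z ξ = 0, u = X i + α 1, and 1^T i = 0. Then the total active power loss satisfies Σ_{e ∈ E} Re(z_e) |ξ_e|² = conj(i)^T Re(X) i, where Re(X) denotes the entrywise real part of X and conj(i) the entrywise complex conjugate of i. -/

import Mathlib

open Matrix

/-- Under the network equations `Aᵀξ + i = 0`, `Au + Zξ = 0`, `u = Xi + α1`,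
`1ᵀi = 0`, with `X` symmetric, the total line loss `Σ_e Re(z_e)|ξ_e|²` equals
`conj(i)ᵀ Re(X) i`. -/
theorem total_losses_eq_quadratic_form (E : Type) [Fintype E] [DecidableEq E] (n : ℕ) (hn : 1 ≤ n)
    (A : Matrix E (Fin n) ℝ) (z : E → ℂ)
    (X : Matrix (Fin n) (Fin n) ℂ) (hXsym : Xᵀ = X)
    (i u : Fin n → ℂ) (ξ : E → ℂ) (α : ℂ)
    (hKCL : (A.map (fun a => (a : ℂ)))ᵀ.mulVec ξ + i = 0)
    (hKVL : (A.map (fun a => (a : ℂ))).mulVec u + (Matrix.diagonal z).mulVec ξ = 0)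
    (hu : u = X.mulVec i + α • fun _ => (1 : ℂ))
    (hi : ∑ v, i v = 0) :
    ((∑ e, (z e).re * ‖ξ e‖ ^ 2 : ℝ) : ℂ)
      = star i ⬝ᵥ (X.map (fun a => ((a.re : ℝ) : ℂ))).mulVec i := by
  set Ac := A.map (fun a => (a : ℂ)) with hAc
  have h1 : Acᵀ.mulVec ξ = -i := eq_neg_of_add_eq_zero_left hKCL
  have h2 : Ac.mulVec u = -(Matrix.diagonal z).mulVec ξ := eq_neg_of_add_eq_zero_left hKVL
  have hstar : Acᵀ.mulVec (star ξ) = star (Acᵀ.mulVec ξ) := by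
    funext v
    simp [hAc, mulVec, dotProduct, Pi.star_apply, map_sum, _root_.map_mul, Complex.conj_ofReal,
      RCLike.star_def]
  have hiu : star i ⬝ᵥ u = star ξ ⬝ᵥ (Matrix.diagonal z).mulVec ξ := by
    have hsi : star i = -(Acᵀ.mulVec (star ξ)) := by rw [hstar, h1]; simp
    rw [hsi, neg_dotProduct, mulVec_transpose, ← dotProduct_mulVec, h2]
    simp
  have hone : star i ⬝ᵥ (α • fun _ => (1 : ℂ)) = 0 := by
    have h0 : ∑ v, (starRingEnd ℂ) (i v) = 0 := by rw [← map_sum, hi, map_zero]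
    simp only [dotProduct, Pi.smul_apply, smul_eq_mul, mul_one, Pi.star_apply, RCLike.star_def]
    rw [← Finset.sum_mul, h0, zero_mul]
  have key : star i ⬝ᵥ X.mulVec i = ∑ e, z e * ((starRingEnd ℂ) (ξ e) * ξ e) := by
    have h := hiu
    rw [hu, dotProduct_add, hone, add_zero] at h
    rw [h]
    simp only [dotProduct, mulVec, Matrix.diagonal, Pi.star_apply, RCLike.star_def, of_apply]
    refine Finset.sum_congr rfl fun e _ => ?_
    rw [Finset.sum_eq_single e (fun b _ hb => by simp [Ne.symm hb]) (by simp)]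
    simp; ring
  have hsymE : ∀ v w, X w v = X v w := fun v w => by
    simpa using congrFun (congrFun hXsym v) w
  have swap : (∑ v, (starRingEnd ℂ) (i v) * ∑ w, (starRingEnd ℂ) (X v w) * i w)
      = ∑ v, i v * ∑ w, (starRingEnd ℂ) (X v w) * (starRingEnd ℂ) (i w) := by
    simp only [Finset.mul_sum]
    rw [Finset.sum_comm]
    refine Finset.sum_congr rfl fun v _ => Finset.sum_congr rfl fun w _ => ?_
    rw [hsymE v w]
    ring
  have key2 : (∑ v, (starRingEnd ℂ) (i v) * ∑ w, (starRingEnd ℂ) (X v w) * i w)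
      = ∑ e, (starRingEnd ℂ) (z e) * ((starRingEnd ℂ) (ξ e) * ξ e) := by
    have hconj := congrArg (starRingEnd ℂ) key
    simp only [map_sum, _root_.map_mul, dotProduct, mulVec, Pi.star_apply, RCLike.star_def,
      Complex.conj_conj] at hconj
    rw [swap, hconj]
    exact Finset.sum_congr rfl fun e _ => by ring
  have habs : ∀ e, ((starRingEnd ℂ) (ξ e) * ξ e) = ((‖ξ e‖ ^ 2 : ℝ) : ℂ) := by
    intro e
    rw [mul_comm, Complex.mul_conj]
    norm_cast
    rw [Complex.sq_norm]
  have expand : star i ⬝ᵥ (X.map (fun a => ((a.re : ℝ) : ℂ))).mulVec i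
      = (star i ⬝ᵥ X.mulVec i
         + ∑ v, (starRingEnd ℂ) (i v) * ∑ w, (starRingEnd ℂ) (X v w) * i w) / 2 := by
    simp only [dotProduct, mulVec, map_apply, Pi.star_apply, RCLike.star_def, Finset.mul_sum]
    rw [← Finset.sum_add_distrib, Finset.sum_div]
    refine Finset.sum_congr rfl fun v _ => ?_
    rw [← Finset.sum_add_distrib, Finset.sum_div]
    refine Finset.sum_congr rfl fun w _ => ?_
    have hre : (((X v w).re : ℝ) : ℂ) = (X v w + (starRingEnd ℂ) (X v w)) / 2 := by
      rw [Complex.add_conj]; push_cast; ring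
    rw [hre]; ring
  rw [expand, key, key2, ← Finset.sum_add_distrib, Finset.sum_div]
  push_cast
  refine Finset.sum_congr rfl fun e _ => ?_
  rw [habs e]
  have hz : ((z e).re : ℂ) = (z e + (starRingEnd ℂ) (z e)) / 2 := by
    rw [Complex.add_conj]; push_cast; ring
  rw [hz]
  push_cast
  ring
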